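/- Let (A_1,…,A_n) be the current partial allocation and let g_1,…,g_n be n unassigned goods with profile vectors p_{g_i} = (d_{A_2}(g_i) − d_{A_1}(g_i), …, d_{A_n}(g_i) − d_{A_1}(g_i)) ∈ ℤ^{n−1}. Suppose that in each coordinate the profile vectors differ by at most λ: max_i (p_{g_i})_j − min_i (p_{g_i})_j ≤ λ for all j. Then for every bijection σ assigning the goods g_1,…,g_n one-to-one to the bundles A_1,…,A_n, the total increase in violated edges, Σ_{i=1}^n d_{A_{σ(i)}}(g_i), is at most |E(A_1 ∪ ⋯ ∪ A_n, {g_1,…,g_n})|/n + nλ. -/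

import Mathlib

open scoped Classical

/-- Number of conflict edges with one endpoint in `X` and the other in `Y`. -/
noncomputable def edgesBetween {γ : Type*} [Fintype γ]
    (G : SimpleGraph γ) (X Y : Finset γ) : ℕ :=
  (G.edgeFinset.filter (fun e => ∃ x ∈ X, ∃ y ∈ Y, e = s(x, y))).card

/-- matching lemma: if the profile vectors of the `n` chosen
goods differ coordinatewise by at most `λ`, then for every assignment of the
goods to the bundles, the violation increase `Σ_i d_{A_{σ(i)}}(g_i)` is at
most `|E(A_1 ∪ ⋯ ∪ A_n, {g_1, …, g_n})| / n + n λ`. -/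
theorem stmt_16 {γ : Type*} [Fintype γ] [DecidableEq γ] (n : ℕ) (hn : 0 < n)
    (G : SimpleGraph γ) [DecidableRel G.Adj]
    (A : Fin n → Finset γ) (g : Fin n → γ)
    (hdisj : ∀ a a' : Fin n, a ≠ a' → Disjoint (A a) (A a'))
    (hginj : Function.Injective g)
    (hnew : ∀ (i : Fin n) (a : Fin n), g i ∉ A a)
    (lam : ℝ) (hlam : 0 ≤ lam)
    (hprof : ∀ (a : Fin n) (i i' : Fin n),
      ((((A a).filter (G.Adj (g i))).card : ℝ)
          - ((A ⟨0, hn⟩).filter (G.Adj (g i))).card)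
        - ((((A a).filter (G.Adj (g i'))).card : ℝ)
          - ((A ⟨0, hn⟩).filter (G.Adj (g i'))).card) ≤ lam) :
    ∀ σ : Equiv.Perm (Fin n),
      (∑ i : Fin n, (((A (σ i)).filter (G.Adj (g i))).card : ℝ))
        ≤ (edgesBetween G (Finset.univ.biUnion A) (Finset.univ.image g) : ℝ) / n
          + n * lam := by
  intro σ
  set U : Finset γ := Finset.univ.biUnion A with hU
  set z : Fin n → Fin n → ℝ := fun i a => (((A a).filter (G.Adj (g i))).card : ℝ) with hz
  have hxU : ∀ x ∈ U, ∀ i : Fin n, x ≠ g i := by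
    intro x hx i hxi
    rw [hU, Finset.mem_biUnion] at hx
    obtain ⟨a, -, hxa⟩ := hx
    exact hnew i a (hxi ▸ hxa)
  -- Step A: total sum equals at most edgesBetween
  have hsum1 : ∀ i : Fin n, ∑ a : Fin n, ((A a).filter (G.Adj (g i))).card
      = (U.filter (G.Adj (g i))).card := by
    intro i
    rw [hU, Finset.filter_biUnion, Finset.card_biUnion]
    intro a _ a' _ h
    exact ((hdisj a a' h).mono (Finset.filter_subset _ _) (Finset.filter_subset _ _))
  have hA : ∑ i : Fin n, ∑ a : Fin n, ((A a).filter (G.Adj (g i))).card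
      ≤ edgesBetween G U (Finset.univ.image g) := by
    simp only [hsum1]
    rw [← Finset.card_sigma]
    apply Finset.card_le_card_of_injOn (fun p => s(p.2, g p.1))
    · rintro ⟨i, x⟩ hx
      simp only [Finset.mem_coe, Finset.mem_sigma, Finset.mem_filter, Finset.mem_univ, true_and] at hx
      obtain ⟨hxU', hadj⟩ := hx
      simp only [Finset.mem_coe, edgesBetween, Finset.mem_filter, SimpleGraph.mem_edgeFinset,
        SimpleGraph.mem_edgeSet]
      exact ⟨hadj.symm, x, hxU', g i, Finset.mem_image_of_mem g (Finset.mem_univ i), rfl⟩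
    · rintro ⟨i, x⟩ hx ⟨i', x'⟩ hx' heq
      simp only [Finset.mem_coe, Finset.mem_sigma, Finset.mem_filter, Finset.mem_univ,
        true_and] at hx hx'
      simp only [Sym2.eq_iff] at heq
      rcases heq with ⟨h1, h2⟩ | ⟨h1, h2⟩
      · exact Sigma.ext (hginj h2) (heq_of_eq h1)
      · exact absurd h1 (hxU x hx.1 i')
  -- Step B: per-term bound
  have hB : ∀ i : Fin n, (n : ℝ) * z i (σ i)
      ≤ ∑ i' : Fin n, (z i' (σ i) - z i' ⟨0, hn⟩) + n * (z i ⟨0, hn⟩ + lam) := by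
    intro i
    have : ∀ i' : Fin n, z i (σ i) ≤ (z i' (σ i) - z i' ⟨0, hn⟩) + (z i ⟨0, hn⟩ + lam) := by
      intro i'
      have := hprof (σ i) i i'
      simp only [hz] at *
      linarith
    calc (n : ℝ) * z i (σ i) = ∑ _i' : Fin n, z i (σ i) := by
          simp [Finset.sum_const, mul_comm]
      _ ≤ ∑ i' : Fin n, ((z i' (σ i) - z i' ⟨0, hn⟩) + (z i ⟨0, hn⟩ + lam)) :=
          Finset.sum_le_sum fun i' _ => this i'
      _ = ∑ i' : Fin n, (z i' (σ i) - z i' ⟨0, hn⟩) + n * (z i ⟨0, hn⟩ + lam) := by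
          rw [Finset.sum_add_distrib, Finset.sum_const, Finset.card_univ,
            Fintype.card_fin, nsmul_eq_mul]
  have hsumB : (n : ℝ) * ∑ i : Fin n, z i (σ i)
      ≤ ∑ i : Fin n, ∑ a : Fin n, z i a + (n : ℝ) * n * lam := by
    have h1 : (n : ℝ) * ∑ i : Fin n, z i (σ i) = ∑ i : Fin n, (n : ℝ) * z i (σ i) := by
      rw [Finset.mul_sum]
    rw [h1]
    have h2 : ∑ i : Fin n, (∑ i' : Fin n, (z i' (σ i) - z i' ⟨0, hn⟩) + n * (z i ⟨0, hn⟩ + lam))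
        = ∑ i : Fin n, ∑ a : Fin n, z i a + (n : ℝ) * n * lam := by
      rw [Finset.sum_add_distrib]
      have h3 : ∑ i : Fin n, ∑ i' : Fin n, (z i' (σ i) - z i' ⟨0, hn⟩)
          = ∑ a : Fin n, ∑ i' : Fin n, (z i' a - z i' ⟨0, hn⟩) :=
        (Equiv.sum_comp σ fun a => ∑ i' : Fin n, (z i' a - z i' ⟨0, hn⟩))
      rw [h3]
      simp only [Finset.sum_sub_distrib, mul_add, Finset.sum_add_distrib,
        Finset.sum_const, Finset.card_univ, Fintype.card_fin, nsmul_eq_mul,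
        ← Finset.mul_sum]
      rw [Finset.sum_comm]
      ring
    calc ∑ i : Fin n, (n : ℝ) * z i (σ i)
        ≤ ∑ i : Fin n, (∑ i' : Fin n, (z i' (σ i) - z i' ⟨0, hn⟩) + n * (z i ⟨0, hn⟩ + lam)) :=
          Finset.sum_le_sum fun i _ => hB i
      _ = _ := h2
  -- Combine
  have hAr : ∑ i : Fin n, ∑ a : Fin n, z i a ≤ (edgesBetween G U (Finset.univ.image g) : ℝ) := by
    have := hA
    have : ((∑ i : Fin n, ∑ a : Fin n, ((A a).filter (G.Adj (g i))).card : ℕ) : ℝ)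
        ≤ ((edgesBetween G U (Finset.univ.image g) : ℕ) : ℝ) := Nat.cast_le.mpr hA
    simpa [hz] using this
  have hnpos : (0 : ℝ) < n := by exact_mod_cast hn
  have hmain : (n : ℝ) * ∑ i : Fin n, z i (σ i)
      ≤ (edgesBetween G U (Finset.univ.image g) : ℝ) + (n : ℝ) * n * lam := by
    linarith
  have goal' : ∑ i : Fin n, z i (σ i)
      ≤ (edgesBetween G U (Finset.univ.image g) : ℝ) / n + n * lam := by
    rw [div_add' _ _ _ (ne_of_gt hnpos), le_div_iff₀ hnpos]
    nlinarith
  simpa [hz, hU] using goal'
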